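/- Let p ≡ 1 (mod 4) be prime, A ⊆ (ℤ/pℤ)*, and suppose the largest sum-free subset of A has size |A|/3 + ψ. If D := ½(⌊2p/3⌋ - ⌊p/3⌋) - |Q ∩ [p/3,2p/3)| > 0 (where Q is the set of quadratic residues), then |∑_{x ∈ A} (x/p)| ≤ (2/D)·(ψ·|Q| + |Q|). -/

import Mathlib

open Finset

lemma nat_div_aux3 (p : ℕ) (h : p % 3 ≠ 0) (h5 : 5 ≤ p) :
    (2*p+2)/3 - (p+2)/3 = (2*p)/3 - p/3 ∧ p - 1 ≤ 3*((2*p+2)/3 - (p+2)/3) ∧ p/3 ≤ (2*p)/3 := by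
  obtain ⟨k, hk⟩ : ∃ k, p = 3*k+1 ∨ p = 3*k+2 := ⟨p/3, by omega⟩
  rcases hk with hk | hk <;> subst hk <;> omega

set_option maxHeartbeats 1000000 in
/-- For `p ≡ 1 (mod 4)` prime and `A ⊆ (ℤ/pℤ)*` with `sf(A) = |A|/3 + ψ`: if
`D = ½(⌊2p/3⌋ - ⌊p/3⌋) - |Q ∩ [p/3,2p/3)| > 0`, then
`|∑_{x ∈ A} (x/p)| ≤ (2/D)·(ψ|Q| + |Q|)`. -/
theorem legendre_sum_bound_of_sf (p : ℕ) [Fact p.Prime] (hp4 : p % 4 = 1)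
    (A Q I : Finset (ZMod p)) (hA : ∀ a ∈ A, a ≠ 0)
    (hQ : Q = Finset.univ.filter (fun x : ZMod p => x ≠ 0 ∧ ∃ y : ZMod p, y * y = x))
    (hI : I = Finset.univ.filter (fun x : ZMod p => p ≤ 3 * x.val ∧ 3 * x.val < 2 * p))
    (sf : ℕ)
    (hsf : sf = sSup {k : ℕ | ∃ B ⊆ A, (∀ a ∈ B, ∀ b ∈ B, a + b ∉ B) ∧ B.card = k})
    (ψ D : ℝ) (hψ : (sf : ℝ) = (A.card : ℝ) / 3 + ψ)
    (hD : D = ((((2 * p) / 3 : ℕ) : ℝ) - ((p / 3 : ℕ) : ℝ)) / 2 - ((Q ∩ I).card : ℝ))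
    (hDpos : 0 < D) :
    |∑ x ∈ A, (legendreSym p (x.val : ℤ) : ℝ)| ≤ (2 / D) * (ψ * Q.card + Q.card) := by
  have hp : p.Prime := Fact.out
  have hp5 : 5 ≤ p := by
    have h2 := hp.two_le
    omega
  have hp3 : p % 3 ≠ 0 := by
    intro h
    have h3 : 3 ∣ p := Nat.dvd_of_mod_eq_zero h
    rcases (hp.eq_one_or_self_of_dvd 3 h3) with h' | h' <;> omega
  set χ := quadraticChar (ZMod p) with hχ
  -- Q is the set where χ = 1
  have hQχ : Q = Finset.univ.filter (fun x : ZMod p => χ x = 1) := by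
    rw [hQ]
    apply Finset.filter_congr
    intro x _
    constructor
    · rintro ⟨hx0, y, hy⟩
      exact (quadraticChar_one_iff_isSquare hx0).mpr ⟨y, hy.symm⟩
    · intro h1
      have hx0 : x ≠ 0 := by
        intro h0
        rw [h0] at h1
        simp [hχ, quadraticChar_zero] at h1
      obtain ⟨y, hy⟩ := (quadraticChar_one_iff_isSquare hx0).mp h1
      exact ⟨hx0, y, hy.symm⟩
  set N : Finset (ZMod p) := Finset.univ.filter (fun x : ZMod p => χ x = -1) with hN
  -- |N| = |Q|
  have hNQ : N.card = Q.card := by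
    have hring : ringChar (ZMod p) ≠ 2 := by
      rw [ZMod.ringChar_zmod_n]; omega
    have h0 : ∑ x : ZMod p, χ x = 0 := quadraticChar_sum_zero hring
    have h1 : ∑ x : ZMod p, χ x =
        ∑ x : ZMod p, ((if χ x = 1 then (1 : ℤ) else 0) - (if χ x = -1 then (1 : ℤ) else 0)) := by
      apply Finset.sum_congr rfl
      intro x _
      by_cases hx : x = 0
      · simp [hx, hχ, quadraticChar_zero]
      · rcases quadraticChar_dichotomy hx with h | h <;> simp [hχ] at h ⊢ <;> rw [h] <;> norm_num
    rw [h1, Finset.sum_sub_distrib] at h0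
    simp only [Finset.sum_boole] at h0
    rw [hQχ, hN]
    omega
  -- 0 is not in I, I is sum-free
  have hI0 : (0 : ZMod p) ∉ I := by
    rw [hI]; simp [ZMod.val_zero]
  have hIsf : ∀ a b : ZMod p, a ∈ I → b ∈ I → a + b ∉ I := by
    intro a b ha hb hab
    rw [hI] at ha hb hab
    simp only [Finset.mem_filter, Finset.mem_univ, true_and] at ha hb hab
    have hval : (a + b).val = (a.val + b.val) % p := ZMod.val_add a b
    have hav : a.val < p := ZMod.val_lt a
    have hbv : b.val < p := ZMod.val_lt b
    rcases Nat.lt_or_ge (a.val + b.val) p with h | h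
    · rw [Nat.mod_eq_of_lt h] at hval; omega
    · have : (a.val + b.val) % p = a.val + b.val - p := by
        rw [Nat.mod_eq_sub_mod h, Nat.mod_eq_of_lt (by omega)]
      rw [this] at hval; omega
  -- cardinality of I
  have hIcard : I.card = (2 * p + 2) / 3 - (p + 2) / 3 := by
    have hbij : I.card = ((Finset.range p).filter (fun v => p ≤ 3 * v ∧ 3 * v < 2 * p)).card := by
      apply Finset.card_bij (fun x _ => x.val)
      · intro x hx
        rw [hI] at hx
        simp only [Finset.mem_filter, Finset.mem_univ, true_and] at hx
        simp only [Finset.mem_filter, Finset.mem_range]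
        exact ⟨ZMod.val_lt x, hx⟩
      · intro x _ y _ h
        exact ZMod.val_injective p h
      · intro v hv
        simp only [Finset.mem_filter, Finset.mem_range] at hv
        refine ⟨(v : ZMod p), ?_, ZMod.val_cast_of_lt hv.1⟩
        rw [hI]
        simp only [Finset.mem_filter, Finset.mem_univ, true_and, ZMod.val_cast_of_lt hv.1]
        exact hv.2
    have heq : (Finset.range p).filter (fun v => p ≤ 3 * v ∧ 3 * v < 2 * p) =
        Finset.Ico ((p + 2) / 3) ((2 * p + 2) / 3) := by
      ext v
      simp only [Finset.mem_filter, Finset.mem_range, Finset.mem_Ico]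
      omega
    rw [hbij, heq, Nat.card_Ico]
  -- sum-free bound for dilates
  have hK1 : ∀ x : ZMod p, (A.filter (fun a => x * a ∈ I)).card ≤ sf := by
    intro x
    set B := A.filter (fun a => x * a ∈ I) with hB
    have hBA : B ⊆ A := Finset.filter_subset _ _
    have hBsf : ∀ a ∈ B, ∀ b ∈ B, a + b ∉ B := by
      intro a ha b hb hab
      rw [hB] at ha hb hab
      simp only [Finset.mem_filter] at ha hb hab
      have := hIsf (x * a) (x * b) ha.2 hb.2
      rw [← mul_add] at this
      exact this hab.2
    rw [hsf]
    apply le_csSup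
    · refine ⟨A.card, ?_⟩
      rintro k ⟨C, hCA, _, hCk⟩
      rw [← hCk]
      exact Finset.card_le_card hCA
    · exact ⟨B, hBA, hBsf, rfl⟩
  -- multiplication bijection
  have hbij : ∀ a : ZMod p, a ≠ 0 → ∀ ε : ℤ,
      ((Finset.univ.filter (fun x : ZMod p => χ x = ε)).filter (fun x => x * a ∈ I)).card
      = (I.filter (fun z => χ z = ε * χ a)).card := by
    intro a ha ε
    apply Finset.card_bij (fun x _ => x * a)
    · intro x hx
      simp only [Finset.mem_filter, Finset.mem_univ, true_and] at hx ⊢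
      refine ⟨hx.2, ?_⟩
      rw [map_mul, hx.1]
    · intro x _ y _ h
      exact mul_right_cancel₀ ha h
    · intro z hz
      simp only [Finset.mem_filter, Finset.mem_univ, true_and] at hz
      refine ⟨z * a⁻¹, ?_, by field_simp⟩
      simp only [Finset.mem_filter, Finset.mem_univ, true_and]
      constructor
      · rw [map_mul, hz.2]
        have h1 : χ a * χ a⁻¹ = 1 := by
          rw [← map_mul, mul_inv_cancel₀ ha, map_one]
        calc ε * χ a * χ a⁻¹ = ε * (χ a * χ a⁻¹) := by ring
          _ = ε := by rw [h1, mul_one]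
      · have : z * a⁻¹ * a = z := by field_simp
        rw [this]; exact hz.1
  -- counts
  set nQ := (I.filter (fun z => χ z = 1)).card with hnQ
  set nN := (I.filter (fun z => χ z = -1)).card with hnN
  have h7 : ∀ a ∈ A, (Q.filter (fun x => x * a ∈ I)).card = if χ a = 1 then nQ else nN := by
    intro a ha
    have ha0 := hA a ha
    rw [hQχ]
    have h := hbij a ha0 1
    rcases quadraticChar_dichotomy ha0 with hc | hc <;> rw [← hχ] at hc <;> rw [h]
    · simp only [hc, mul_one, if_pos, hnQ]
    · simp only [hc, hnN, hnQ]
      norm_num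
  have h7N : ∀ a ∈ A, (N.filter (fun x => x * a ∈ I)).card = if χ a = 1 then nN else nQ := by
    intro a ha
    have ha0 := hA a ha
    rw [hN]
    have h := hbij a ha0 (-1)
    rcases quadraticChar_dichotomy ha0 with hc | hc <;> rw [← hχ] at hc <;> rw [h]
    · simp only [hc, hnN, hnQ]
      norm_num
    · simp only [hc, hnN, hnQ]
      norm_num
  set a1 := (A.filter (fun a => χ a = 1)).card with ha1
  set a2 := (A.filter (fun a => ¬ χ a = 1)).card with ha2
  have hsplitQ : ∑ a ∈ A, (if χ a = 1 then nQ else nN) = a1 * nQ + a2 * nN := by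
    rw [Finset.sum_ite, Finset.sum_const, Finset.sum_const, smul_eq_mul, smul_eq_mul]
  have hsplitN : ∑ a ∈ A, (if χ a = 1 then nN else nQ) = a1 * nN + a2 * nQ := by
    rw [Finset.sum_ite, Finset.sum_const, Finset.sum_const, smul_eq_mul, smul_eq_mul]
  -- double counting
  have cnt : ∀ T : Finset (ZMod p), ∑ x ∈ T, (A.filter (fun a => x * a ∈ I)).card
      = ∑ a ∈ A, (T.filter (fun x => x * a ∈ I)).card := by
    intro T
    simp_rw [Finset.card_filter]
    exact Finset.sum_comm
  have ineq1 : a1 * nQ + a2 * nN ≤ Q.card * sf := by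
    calc a1 * nQ + a2 * nN = ∑ a ∈ A, (if χ a = 1 then nQ else nN) := hsplitQ.symm
      _ = ∑ a ∈ A, (Q.filter (fun x => x * a ∈ I)).card :=
          (Finset.sum_congr rfl h7).symm
      _ = ∑ x ∈ Q, (A.filter (fun a => x * a ∈ I)).card := (cnt Q).symm
      _ ≤ ∑ _x ∈ Q, sf := Finset.sum_le_sum (fun x _ => hK1 x)
      _ = Q.card * sf := by rw [Finset.sum_const, smul_eq_mul]
  have ineq2 : a1 * nN + a2 * nQ ≤ Q.card * sf := by
    calc a1 * nN + a2 * nQ = ∑ a ∈ A, (if χ a = 1 then nN else nQ) := hsplitN.symm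
      _ = ∑ a ∈ A, (N.filter (fun x => x * a ∈ I)).card :=
          (Finset.sum_congr rfl h7N).symm
      _ = ∑ x ∈ N, (A.filter (fun a => x * a ∈ I)).card := (cnt N).symm
      _ ≤ ∑ _x ∈ N, sf := Finset.sum_le_sum (fun x _ => hK1 x)
      _ = N.card * sf := by rw [Finset.sum_const, smul_eq_mul]
      _ = Q.card * sf := by rw [hNQ]
  -- the character sum
  have hS : ∑ a ∈ A, χ a = (a1 : ℤ) - a2 := by
    rw [← Finset.sum_filter_add_sum_filter_not A (fun a => χ a = 1)]
    have h1 : ∑ a ∈ A.filter (fun a => χ a = 1), χ a = (a1 : ℤ) := by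
      rw [Finset.sum_congr rfl (fun x hx => (Finset.mem_filter.mp hx).2)]
      simp [ha1]
    have h2 : ∑ a ∈ A.filter (fun a => ¬ χ a = 1), χ a = -(a2 : ℤ) := by
      have : ∀ x ∈ A.filter (fun a => ¬ χ a = 1), χ x = -1 := by
        intro x hx
        rw [Finset.mem_filter] at hx
        rcases quadraticChar_dichotomy (hA x hx.1) with h | h
        · exact absurd h hx.2
        · exact h
      rw [Finset.sum_congr rfl this]
      simp [ha2]
    rw [h1, h2]
    ring
  -- basic cardinalities
  have hAcard : a1 + a2 = A.card := Finset.card_filter_add_card_filter_not _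
  have hIQN : nQ + nN = I.card := by
    have hcongr : I.filter (fun z => χ z = -1) = I.filter (fun z => ¬ χ z = 1) := by
      apply Finset.filter_congr
      intro z hz
      have hz0 : z ≠ 0 := fun h => hI0 (h ▸ hz)
      exact quadraticChar_eq_neg_one_iff_not_one hz0
    rw [hnQ, hnN, hcongr]
    exact Finset.card_filter_add_card_filter_not _
  have hQInQ : (Q ∩ I).card = nQ := by
    rw [hnQ]
    congr 1
    rw [hQχ]
    ext z
    simp only [Finset.mem_inter, Finset.mem_filter, Finset.mem_univ, true_and]
    tauto
  -- 2|Q| ≤ p - 1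
  have hq2 : 2 * Q.card ≤ p - 1 := by
    have hdisj : Disjoint Q N := by
      rw [Finset.disjoint_left]
      intro x hx hx'
      rw [hQχ, Finset.mem_filter] at hx
      rw [hN, Finset.mem_filter] at hx'
      omega
    have hsub : Q ∪ N ⊆ Finset.univ.erase (0 : ZMod p) := by
      intro x hx
      rw [Finset.mem_union] at hx
      apply Finset.mem_erase.mpr
      refine ⟨?_, Finset.mem_univ x⟩
      rcases hx with hx | hx
      · rw [hQχ, Finset.mem_filter] at hx
        intro h0
        rw [h0] at hx
        simp [hχ, quadraticChar_zero] at hx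
      · rw [hN, Finset.mem_filter] at hx
        intro h0
        rw [h0] at hx
        simp [hχ, quadraticChar_zero] at hx
    have h1 := Finset.card_le_card hsub
    rw [Finset.card_union_of_disjoint hdisj, Finset.card_erase_of_mem (Finset.mem_univ _),
      Finset.card_univ, ZMod.card] at h1
    omega
  obtain ⟨haux1, haux2, haux3⟩ := nat_div_aux3 p hp3 hp5
  have hI3 : p - 1 ≤ 3 * I.card := by rw [hIcard]; exact haux2
  -- rewrite the goal sum
  have hgoal : ∑ x ∈ A, (legendreSym p (x.val : ℤ) : ℝ) = (((∑ a ∈ A, χ a : ℤ)) : ℝ) := by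
    push_cast
    apply Finset.sum_congr rfl
    intro x _
    have : legendreSym p (x.val : ℤ) = χ x := by
      unfold legendreSym
      rw [hχ]
      congr 1
      push_cast
      simp [ZMod.natCast_val, ZMod.cast_id]
    rw [this]
  rw [hgoal]
  -- pass to the reals
  set rq : ℝ := (Q.card : ℝ) with hrq
  have hDI : D = (I.card : ℝ) / 2 - (nQ : ℝ) := by
    rw [hD, hQInQ]
    rw [hIcard, haux1, Nat.cast_sub haux3]
  have R1 : (a1 : ℝ) * nQ + (a2 : ℝ) * nN ≤ rq * sf := by
    exact_mod_cast Nat.cast_le.mpr ineq1 |>.trans_eq (by push_cast; ring)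
  have R2 : (a1 : ℝ) * nN + (a2 : ℝ) * nQ ≤ rq * sf := by
    exact_mod_cast Nat.cast_le.mpr ineq2 |>.trans_eq (by push_cast; ring)
  have R3 : (a1 : ℝ) + a2 = A.card := by exact_mod_cast hAcard
  have R4 : ((∑ a ∈ A, χ a : ℤ) : ℝ) = (a1 : ℝ) - a2 := by exact_mod_cast hS
  have R5 : (nQ : ℝ) + nN = I.card := by exact_mod_cast hIQN
  have R7 : 2 * rq ≤ 3 * (I.card : ℝ) := by
    have h := le_trans hq2 hI3
    have h' : 2 * Q.card ≤ 3 * I.card := by omega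
    rw [hrq]
    exact_mod_cast h'
  set s : ℝ := ((∑ a ∈ A, χ a : ℤ) : ℝ) with hs
  clear_value s rq nQ nN a1 a2
  have hA0 : (0 : ℝ) ≤ (A.card : ℝ) := Nat.cast_nonneg _
  have hq0 : (0 : ℝ) ≤ rq := by rw [hrq]; exact Nat.cast_nonneg _
  have key : (0 : ℝ) ≤ (A.card : ℝ) * (3 * (I.card : ℝ) - 2 * rq) :=
    mul_nonneg hA0 (by linarith)
  have e2 : s * D = (a1 : ℝ) * nN + (a2 : ℝ) * nQ - (A.card : ℝ) * (I.card : ℝ) / 2 := by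
    rw [R4, hDI]
    have h2 : (a2 : ℝ) = (A.card : ℝ) - a1 := by linarith
    have hn : (nN : ℝ) = (I.card : ℝ) - nQ := by linarith
    rw [h2, hn]
    ring
  have e1 : -(s * D) = (a1 : ℝ) * nQ + (a2 : ℝ) * nN - (A.card : ℝ) * (I.card : ℝ) / 2 := by
    rw [R4, hDI]
    have h2 : (a2 : ℝ) = (A.card : ℝ) - a1 := by linarith
    have hn : (nN : ℝ) = (I.card : ℝ) - nQ := by linarith
    rw [h2, hn]
    ring
  rw [hψ] at R1 R2
  have hs1 : s * D ≤ rq * ψ := by linarith [R2, key, e2]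
  have hs2 : -(s * D) ≤ rq * ψ := by linarith [R1, key, e1]
  have hψq : (0 : ℝ) ≤ rq * ψ := by linarith
  have habs : |s| * D ≤ rq * ψ := by
    rcases abs_cases s with ⟨h, _⟩ | ⟨h, _⟩ <;> rw [h] <;> [linarith; linarith [hs2]]
  rw [div_mul_eq_mul_div, le_div_iff₀ hDpos]
  calc |s| * D ≤ rq * ψ := habs
    _ ≤ 2 * (ψ * rq + rq) := by linarith
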